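/- Suppose f(y | α, β) ≤ C for all (α, β) ∈ ℝ^d × ℝ^p, and ℓ(α, β) = −log f(y | α, β) satisfies ℓ(α, β) ≤ ℓ₀ + η^⊤(α, λβ) + (L/2)(‖α‖₂² + λ²‖β‖₂²) for some ℓ₀ ∈ ℝ, L ≥ 0, η ∈ ℝ^{d+p}. Let π(α, β) ∝ f(y | α, β) exp(−θ²‖α‖₂²/2 − λ‖β‖₁) and μ(α, β) = θ^d (2π)^{−d/2} exp(−θ²‖α‖₂²/2) (λ/2)^p exp(−λ‖β‖₁). Then for all (α, β), π(α, β)/μ(α, β) ≤ C e^{ℓ₀} ((L+θ²)/θ²)^{d/2} max{4/(√5−1), 2√L/(√5−1)}^p. -/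

import Mathlib

open MeasureTheory Real

open Set Filter

set_option maxHeartbeats 1000000

noncomputable def millG (t : ℝ) : ℝ := (Real.sqrt (t^2+4) - t)/2 * Real.exp (-t^2/2)

noncomputable def millG' (t : ℝ) : ℝ :=
  ((t / Real.sqrt (t^2+4) - 1)/2 - t * ((Real.sqrt (t^2+4) - t)/2)) * Real.exp (-t^2/2)

lemma millG_hasDerivAt (t : ℝ) : HasDerivAt millG (millG' t) t := by
  have hpos : (0:ℝ) < t^2 + 4 := by positivity
  have h1 : HasDerivAt (fun t : ℝ => t^2 + 4) (2*t) t := by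
    simpa using ((hasDerivAt_pow 2 t).add_const 4)
  have h2 : HasDerivAt (fun t : ℝ => Real.sqrt (t^2+4)) (1/(2*Real.sqrt (t^2+4)) * (2*t)) t :=
    (Real.hasDerivAt_sqrt hpos.ne').comp t h1
  have h3 : HasDerivAt (fun t : ℝ => (Real.sqrt (t^2+4) - t)/2)
      ((1/(2*Real.sqrt (t^2+4)) * (2*t) - 1)/2) t := by
    exact (h2.sub (hasDerivAt_id t)).div_const 2
  have h4 : HasDerivAt (fun t : ℝ => Real.exp (-t^2/2)) (Real.exp (-t^2/2) * (-(2*t)/2)) t := by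
    have h5 : HasDerivAt (fun t : ℝ => -t^2/2) (-(2*t)/2) t := by
      simpa using ((hasDerivAt_pow 2 t).neg.div_const 2)
    exact (Real.hasDerivAt_exp _).comp t h5
  have := h3.mul h4
  refine HasDerivAt.congr_deriv this ?_
  have hs : Real.sqrt (t^2+4) ≠ 0 := (Real.sqrt_pos.2 hpos).ne'
  unfold millG'
  field_simp
  ring

lemma millG'_nonpos {t : ℝ} (ht : 0 ≤ t) : millG' t ≤ 0 := by
  have hpos : (0:ℝ) < t^2 + 4 := by positivity
  have hs : 0 < Real.sqrt (t^2+4) := Real.sqrt_pos.2 hpos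
  have hts : t ≤ Real.sqrt (t^2+4) := by
    nlinarith [Real.sq_sqrt hpos.le, Real.sqrt_nonneg (t^2+4)]
  have h1 : (t / Real.sqrt (t^2+4) - 1)/2 ≤ 0 := by
    have : t / Real.sqrt (t^2+4) ≤ 1 := (div_le_one hs).2 hts
    linarith
  have h2 : 0 ≤ t * ((Real.sqrt (t^2+4) - t)/2) := by
    apply mul_nonneg ht; linarith
  have := Real.exp_pos (-t^2/2)
  unfold millG'
  nlinarith

lemma millG'_ge {t : ℝ} (ht : 0 ≤ t) : -Real.exp (-t^2/2) ≤ millG' t := by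
  have hpos : (0:ℝ) < t^2 + 4 := by positivity
  set s := Real.sqrt (t^2+4) with hsdef
  have hs : 0 < s := Real.sqrt_pos.2 hpos
  have hsq : s^2 = t^2+4 := Real.sq_sqrt hpos.le
  have key : t^3 + 3*t ≤ s * (t^2+1) := by
    have ha2 : (s*(t^2+1))^2 = (t^2+4)*(t^2+1)^2 := by rw [mul_pow, hsq]
    nlinarith [mul_pos hs (show (0:ℝ) < t^2+1 by positivity), sq_nonneg t,
      mul_nonneg (mul_nonneg ht ht) ht]
  have h2 : -1 ≤ (t / s - 1)/2 - t * ((s - t)/2) := by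
    rw [← sub_nonneg]
    have expand : (t / s - 1)/2 - t * ((s - t)/2) - (-1)
        = (s * (t^2+1) - (t^3+3*t)) / (2*s) := by
      field_simp
      linear_combination (-t) * hsq
    rw [expand]
    exact div_nonneg (by linarith) (by positivity)
  have := Real.exp_pos (-t^2/2)
  unfold millG'
  nlinarith

lemma le_sqrt_self_aux (t : ℝ) : t ≤ Real.sqrt (t^2+4) := by
  rcases le_or_gt t 0 with h | h
  · exact h.trans (Real.sqrt_nonneg _)
  · have : Real.sqrt (t^2) ≤ Real.sqrt (t^2+4) := Real.sqrt_le_sqrt (by nlinarith)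
    rwa [Real.sqrt_sq h.le] at this

lemma millG_nonneg {t : ℝ} : 0 ≤ millG t := by
  unfold millG
  have hts := le_sqrt_self_aux t
  have := Real.exp_pos (-t^2/2)
  nlinarith

lemma millG_le {t : ℝ} (ht : 0 ≤ t) : millG t ≤ Real.exp (-t^2/2) := by
  unfold millG
  have h1 : Real.sqrt (t^2+4) ≤ t + 2 := by
    have : Real.sqrt (t^2+4) ≤ Real.sqrt ((t+2)^2) := Real.sqrt_le_sqrt (by nlinarith)
    rwa [Real.sqrt_sq (by linarith)] at this
  nlinarith [Real.exp_pos (-t^2/2)]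

lemma millG_tendsto : Tendsto millG atTop (nhds 0) := by
  apply squeeze_zero' (Eventually.of_forall fun t => millG_nonneg)
    (eventually_atTop.2 ⟨0, fun t ht => millG_le ht⟩)
  have h : Tendsto (fun t : ℝ => -t^2/2) atTop atBot := by
    apply Tendsto.atBot_div_const (by norm_num)
    exact tendsto_neg_atBot_iff.2 (tendsto_pow_atTop (by norm_num))
  exact Real.tendsto_exp_atBot.comp h

lemma sqrt5_gt : (2:ℝ) < Real.sqrt 5 := by
  nlinarith [Real.sq_sqrt (by norm_num : (0:ℝ) ≤ 5), Real.sqrt_nonneg 5]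

lemma xg_ge {x : ℝ} (hx : 0 < x) :
    1 / max (4/(Real.sqrt 5 - 1)) (2 * x⁻¹ / (Real.sqrt 5 - 1))
      ≤ x * ((Real.sqrt (x^2+4) - x)/2) := by
  have hs5 : (2:ℝ) < Real.sqrt 5 := sqrt5_gt
  have hs5sq : Real.sqrt 5 ^2 = 5 := Real.sq_sqrt (by norm_num)
  set s5 := Real.sqrt 5
  set s := Real.sqrt (x^2+4) with hsdef
  have hpos : (0:ℝ) < x^2+4 := by positivity
  have hsq : s^2 = x^2+4 := Real.sq_sqrt hpos.le
  have hs0 : 0 < s := Real.sqrt_pos.2 hpos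
  have h51 : (0:ℝ) < s5 - 1 := by linarith
  have ha : (0:ℝ) < 4/(s5-1) := by positivity
  have hb : (0:ℝ) < 2 * x⁻¹ / (s5-1) := div_pos (by positivity) h51
  rcases le_total x 1 with hx1 | hx1
  · have hkey : s5 - 1 + x ≤ s := by
      have h2 : Real.sqrt ((s5-1+x)^2) ≤ s := by
        apply Real.sqrt_le_sqrt
        nlinarith [mul_nonneg (show (0:ℝ) ≤ s5-1 by linarith) (show (0:ℝ) ≤ 1-x by linarith)]
      rwa [Real.sqrt_sq (by linarith)] at h2
    calc 1 / max (4/(s5-1)) (2 * x⁻¹ / (s5-1)) ≤ 1 / (2 * x⁻¹ / (s5-1)) :=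
          one_div_le_one_div_of_le hb (le_max_right _ _)
      _ = (s5-1) * x / 2 := by field_simp
      _ ≤ x * ((s - x)/2) := by nlinarith
  · have hsx : s ≤ s5 * x := by
      have h2 : s ≤ Real.sqrt ((s5*x)^2) := by
        apply Real.sqrt_le_sqrt
        nlinarith
      rwa [Real.sqrt_sq (by positivity)] at h2
    have h8 : (s5-1)*(s+x) ≤ 8*x := by
      nlinarith [mul_nonneg (show (0:ℝ) ≤ s5-1 by linarith) (show (0:ℝ) ≤ s5*x - s by linarith)]
    have h4 : (s - x)*(s + x) = 4 := by nlinarith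
    have hsum : (0:ℝ) < s + x := by linarith
    have hmain : s5 - 1 ≤ 2*x*(s-x) := by
      rw [← mul_le_mul_iff_of_pos_right hsum]
      calc (s5-1)*(s+x) ≤ 8*x := h8
        _ = 2*x*(s-x)*(s+x) := by linear_combination (-2*x) * h4
      
    calc 1 / max (4/(s5-1)) (2 * x⁻¹ / (s5-1)) ≤ 1 / (4/(s5-1)) :=
          one_div_le_one_div_of_le ha (le_max_left _ _)
      _ = (s5-1)/4 := by rw [one_div_div]
      _ ≤ x * ((s - x)/2) := by linarith

lemma millG'_continuous : Continuous millG' := by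
  unfold millG'
  have h1 : Continuous fun t : ℝ => Real.sqrt (t^2+4) :=
    ((continuous_pow 2).add continuous_const).sqrt
  have hne : ∀ t : ℝ, Real.sqrt (t^2+4) ≠ 0 :=
    fun t => (Real.sqrt_pos.2 (by positivity)).ne'
  have h2 : Continuous fun t : ℝ => Real.exp (-t^2/2) := by fun_prop
  exact ((((continuous_id.div h1 hne).sub continuous_const).div_const 2).sub
    (continuous_id.mul ((h1.sub continuous_id).div_const 2))).mul h2

lemma lap_Ioi_bound {L lam : ℝ} (hL : 0 < L) (hlam : 0 < lam) :
    1 / (lam * max (4/(Real.sqrt 5 - 1)) (2 * Real.sqrt L / (Real.sqrt 5 - 1)))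
      ≤ ∫ u in Ioi (0:ℝ), Real.exp (-(L*lam^2)*u^2/2 - lam*u) := by
  have hsL : 0 < Real.sqrt L := Real.sqrt_pos.2 hL
  have hsLsq : Real.sqrt L ^ 2 = L := Real.sq_sqrt hL.le
  set r : ℝ := lam * Real.sqrt L with hr
  have hr0 : 0 < r := by positivity
  set κ : ℝ := (Real.sqrt L)⁻¹ with hκ
  have hκ0 : 0 < κ := by positivity
  set c : ℝ := Real.exp (1/(2*L)) / r with hc
  have hc0 : 0 < c := by positivity
  -- exponent identity
  have hexp : ∀ u : ℝ, Real.exp (1/(2*L)) * Real.exp (-(r*u+κ)^2/2)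
      = Real.exp (-(L*lam^2)*u^2/2 - lam*u) := by
    intro u
    rw [← Real.exp_add]
    congr 1
    have h1 : (r*u+κ)^2 = L*lam^2*u^2 + 2*lam*u + 1/L := by
      rw [hr, hκ]
      field_simp
      linear_combination (lam^2*u^2*L*Real.sqrt L^2 - 1) * hsLsq
    rw [h1]
    field_simp
    ring
  -- pointwise bound on -G₂'
  have hpt : ∀ u : ℝ, 0 ≤ u → -(c * (millG' (r*u+κ) * r)) ≤ Real.exp (-(L*lam^2)*u^2/2 - lam*u)
      ∧ 0 ≤ -(c * (millG' (r*u+κ) * r)) := by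
    intro u hu
    have ht : 0 ≤ r*u+κ := by positivity
    have hcr : c * r = Real.exp (1/(2*L)) := by
      rw [hc]; exact div_mul_cancel₀ _ hr0.ne'
    constructor
    · have := millG'_ge ht
      rw [← hexp u]
      calc -(c * (millG' (r*u+κ) * r)) = (-(millG' (r*u+κ))) * (c*r) := by ring
        _ ≤ Real.exp (-(r*u+κ)^2/2) * (c*r) := by
            apply mul_le_mul_of_nonneg_right (by linarith) (by positivity)
        _ = Real.exp (1/(2*L)) * Real.exp (-(r*u+κ)^2/2) := by rw [hcr]; ring
    · have h2 : millG' (r*u+κ) * r ≤ 0 :=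
        mul_nonpos_of_nonpos_of_nonneg (millG'_nonpos ht) hr0.le
      nlinarith [mul_nonneg hc0.le (neg_nonneg.2 h2)]
  -- derivative
  have hderiv : ∀ u : ℝ, HasDerivAt (fun u => c * millG (r*u+κ)) (c * (millG' (r*u+κ) * r)) u := by
    intro u
    have h1 : HasDerivAt (fun u : ℝ => r*u+κ) r u := by
      simpa using ((hasDerivAt_id u).const_mul r).add_const κ
    exact ((millG_hasDerivAt (r*u+κ)).comp u h1).const_mul c
  -- integrability of the dominating function
  have hdom : IntegrableOn (fun u : ℝ => Real.exp (-lam*u)) (Ioi 0) := by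
    simpa using exp_neg_integrableOn_Ioi 0 hlam
  have hle_dom : ∀ u : ℝ, 0 ≤ u → Real.exp (-(L*lam^2)*u^2/2 - lam*u) ≤ Real.exp (-lam*u) := by
    intro u hu
    apply Real.exp_le_exp.2
    nlinarith [mul_nonneg (mul_nonneg hL.le (sq_nonneg lam)) (sq_nonneg u)]
  have hint_target : IntegrableOn (fun u : ℝ => Real.exp (-(L*lam^2)*u^2/2 - lam*u)) (Ioi 0) := by
    apply Integrable.mono' hdom
      (((Real.continuous_exp).comp (((continuous_const.mul (continuous_pow 2)).div_const 2).sub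
        (continuous_const.mul continuous_id))).aestronglyMeasurable)
    filter_upwards [ae_restrict_mem measurableSet_Ioi] with u hu
    simp only [Function.comp, id_eq]
    rw [Real.norm_eq_abs, abs_of_pos (Real.exp_pos _)]
    exact hle_dom u (le_of_lt hu)
  have hint_G' : IntegrableOn (fun u : ℝ => c * (millG' (r*u+κ) * r)) (Ioi 0) := by
    apply Integrable.mono' hdom
    · exact (continuous_const.mul ((millG'_continuous.comp
        ((continuous_const.mul continuous_id).add continuous_const)).mul
        continuous_const)).aestronglyMeasurable
    filter_upwards [ae_restrict_mem measurableSet_Ioi] with u hu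
    obtain ⟨h1, h2⟩ := hpt u (le_of_lt hu)
    rw [Real.norm_eq_abs, abs_of_nonpos (by linarith)]
    exact h1.trans (hle_dom u (le_of_lt hu))
  -- FTC
  have htend : Tendsto (fun u => c * millG (r*u+κ)) atTop (nhds 0) := by
    have h1 : Tendsto (fun u : ℝ => r*u+κ) atTop atTop :=
      tendsto_atTop_add_const_right _ κ (tendsto_id.const_mul_atTop hr0)
    have := (millG_tendsto.comp h1).const_mul c
    simpa using this
  have hFTC : ∫ u in Ioi (0:ℝ), c * (millG' (r*u+κ) * r) = 0 - c * millG (r*0+κ) :=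
    integral_Ioi_of_hasDerivAt_of_tendsto' (fun u _ => hderiv u) hint_G' htend
  -- conclude
  have hstep : c * millG κ ≤ ∫ u in Ioi (0:ℝ), Real.exp (-(L*lam^2)*u^2/2 - lam*u) := by
    have h1 : ∫ u in Ioi (0:ℝ), -(c * (millG' (r*u+κ) * r)) = c * millG κ := by
      rw [integral_neg, hFTC]; simp
    rw [← h1]
    apply setIntegral_mono_on hint_G'.neg hint_target measurableSet_Ioi
    intro u hu
    exact (hpt u (le_of_lt hu)).1
  have hval : c * millG κ = κ * ((Real.sqrt (κ^2+4) - κ)/2) / lam := by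
    unfold millG
    have hκsq : κ^2 = 1/L := by rw [hκ, inv_pow, hsLsq, one_div]
    rw [hc, hr]
    rw [show -κ^2/2 = -(1/(2*L)) by rw [hκsq]; ring]
    rw [Real.exp_neg]
    have hEpos : (0:ℝ) < Real.exp (1/(2*L)) := Real.exp_pos _
    field_simp [hκ]
    have hκL : κ * Real.sqrt L = 1 := by rw [hκ]; exact inv_mul_cancel₀ hsL.ne'
    linear_combination (-(Real.sqrt (κ^2+4) - κ)) * hκL
  have hxg := xg_ge hκ0
  rw [hκ, inv_inv] at hxg
  have hM0 : (0:ℝ) < max (4/(Real.sqrt 5 - 1)) (2 * Real.sqrt L / (Real.sqrt 5 - 1)) := by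
    have h51 : (0:ℝ) < Real.sqrt 5 - 1 := by nlinarith [sqrt5_gt]
    exact lt_of_lt_of_le (by positivity) (le_max_left _ _)
  calc 1 / (lam * max (4/(Real.sqrt 5 - 1)) (2 * Real.sqrt L / (Real.sqrt 5 - 1)))
      = (1 / max (4/(Real.sqrt 5 - 1)) (2 * Real.sqrt L / (Real.sqrt 5 - 1))) / lam := by
        field_simp [hM0.ne', hlam.ne']
    _ ≤ (κ * ((Real.sqrt (κ^2+4) - κ)/2)) / lam := (div_le_div_iff_of_pos_right hlam).2 hxg
    _ = c * millG κ := hval.symm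
    _ ≤ _ := hstep

lemma lap_Ioi_bound' {L lam : ℝ} (hL : 0 ≤ L) (hlam : 0 < lam) :
    1 / (lam * max (4/(Real.sqrt 5 - 1)) (2 * Real.sqrt L / (Real.sqrt 5 - 1)))
      ≤ ∫ u in Ioi (0:ℝ), Real.exp (-(L*lam^2)*u^2/2 - lam*u) := by
  rcases hL.eq_or_lt with h0 | h0
  · subst h0
    have hval : ∫ u in Ioi (0:ℝ), Real.exp (-(0*lam^2)*u^2/2 - lam*u) = 1/lam := by
      have hderiv : ∀ u : ℝ, u ∈ Ici (0:ℝ) →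
          HasDerivAt (fun u : ℝ => -Real.exp (-(0*lam^2)*u^2/2 - lam*u)/lam)
            (Real.exp (-(0*lam^2)*u^2/2 - lam*u)) u := by
        intro u _
        have h1 : HasDerivAt (fun u : ℝ => -(0*lam^2)*u^2/2 - lam*u) (-lam) u := by
          simp only [zero_mul, neg_zero, zero_div, zero_sub, zero_add]
          exact ((hasDerivAt_id u).const_mul lam).neg.congr_deriv (by simp)
        have := ((Real.hasDerivAt_exp _).comp u h1).neg.div_const lam
        refine HasDerivAt.congr_deriv this ?_
        field_simp
      have hint : IntegrableOn (fun u : ℝ => Real.exp (-(0*lam^2)*u^2/2 - lam*u)) (Ioi 0) := by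
        have : ∀ u : ℝ, Real.exp (-(0*lam^2)*u^2/2 - lam*u) = Real.exp (-(lam*u)) := by
          intro u; norm_num
        simp only [this]
        simpa [neg_mul] using exp_neg_integrableOn_Ioi 0 hlam
      have htend : Tendsto (fun u : ℝ => -Real.exp (-(0*lam^2)*u^2/2 - lam*u)/lam) atTop (nhds 0) := by
        have h1 : Tendsto (fun u : ℝ => -(0*lam^2)*u^2/2 - lam*u) atTop atBot := by
          simp only [zero_mul, neg_zero, zero_div, zero_sub]
          exact tendsto_neg_atBot_iff.2 (tendsto_id.const_mul_atTop hlam)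
        have := (Real.tendsto_exp_atBot.comp h1).neg.div_const lam
        simpa using this
      rw [integral_Ioi_of_hasDerivAt_of_tendsto' hderiv hint htend]
      norm_num
      rw [neg_div, neg_neg, one_div]
    rw [hval]
    have h5a : Real.sqrt 5 ^ 2 = 5 := Real.sq_sqrt (by norm_num)
    have h5b := sqrt5_gt
    have h51 : (0:ℝ) < Real.sqrt 5 - 1 := by linarith
    have h53 : Real.sqrt 5 < 3 := by nlinarith
    rw [Real.sqrt_zero]
    rw [show (2:ℝ) * 0 / (Real.sqrt 5 - 1) = 0 by ring]
    rw [max_eq_left (by positivity)]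
    rw [div_le_div_iff₀ (by positivity) hlam]
    have h14 : (1:ℝ) ≤ 4/(Real.sqrt 5 - 1) := by
      rw [le_div_iff₀ h51]; linarith
    nlinarith [mul_le_mul_of_nonneg_left h14 hlam.le]
  · exact lap_Ioi_bound h0 hlam

lemma integrable_exp_neg_abs' {lam : ℝ} (hlam : 0 < lam) :
    Integrable (fun u : ℝ => Real.exp (-lam*|u|)) := by
  have hcont : Continuous fun u : ℝ => Real.exp (-lam*|u|) :=
    Real.continuous_exp.comp (continuous_const.mul continuous_abs)
  have hIoi : IntegrableOn (fun u : ℝ => Real.exp (-lam*|u|)) (Ioi 0) := by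
    apply Integrable.mono' (exp_neg_integrableOn_Ioi 0 hlam) hcont.aestronglyMeasurable
    filter_upwards with u
    rw [Real.norm_eq_abs, abs_of_pos (Real.exp_pos _)]
    exact Real.exp_le_exp.2 (by nlinarith [le_abs_self u])
  have hIic : IntegrableOn (fun u : ℝ => Real.exp (-lam*|u|)) (Iic 0) := by
    rw [← Measure.map_neg_eq_self (volume : Measure ℝ)]
    have m : MeasurableEmbedding fun x : ℝ => -x := (Homeomorph.neg ℝ).measurableEmbedding
    rw [m.integrableOn_map_iff]
    simp only [Function.comp_def, abs_neg, neg_preimage, neg_Iic, neg_zero]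
    exact (integrableOn_Ici_iff_integrableOn_Ioi).mpr hIoi
  rw [← integrableOn_univ, ← Set.Iic_union_Ioi (a := (0:ℝ))]
  exact hIic.union hIoi

lemma gauss_Ioi_integrableOn {L lam : ℝ} (hL : 0 ≤ L) (hlam : 0 < lam) :
    IntegrableOn (fun u : ℝ => Real.exp (-(L*lam^2)*u^2/2 - lam*u)) (Ioi 0) := by
  apply Integrable.mono' (exp_neg_integrableOn_Ioi 0 hlam)
    ((Real.continuous_exp.comp (((continuous_const.mul (continuous_pow 2)).div_const 2).sub
      (continuous_const.mul continuous_id))).aestronglyMeasurable)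
  filter_upwards [ae_restrict_mem measurableSet_Ioi] with u hu
  simp only [Function.comp, id_eq]
  rw [Real.norm_eq_abs, abs_of_pos (Real.exp_pos _)]
  apply Real.exp_le_exp.2
  show -(L*lam^2)*u^2/2 - lam*u ≤ -lam*u
  nlinarith [mul_nonneg (mul_nonneg hL (sq_nonneg lam)) (sq_nonneg u)]

lemma lap_line {L lam a C' : ℝ} (hL : 0 ≤ L) (hlam : 0 < lam) (hC' : 0 < C')
    (hball : ∀ u : ℝ, Real.exp (-(a*u) - (L*lam^2)*u^2/2) ≤ C') :
    Integrable (fun u : ℝ => Real.exp (-(a*u) - (L*lam^2)*u^2/2 - lam*|u|)) ∧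
    2 / (lam * max (4/(Real.sqrt 5 - 1)) (2 * Real.sqrt L / (Real.sqrt 5 - 1)))
      ≤ ∫ u : ℝ, Real.exp (-(a*u) - (L*lam^2)*u^2/2 - lam*|u|) := by
  set h : ℝ → ℝ := fun u => Real.exp (-(a*u) - (L*lam^2)*u^2/2 - lam*|u|) with hh_def
  have hsplit : ∀ u : ℝ, Real.exp (-(a*u) - (L*lam^2)*u^2/2 - lam*|u|)
      = Real.exp (-(a*u) - (L*lam^2)*u^2/2) * Real.exp (-lam*|u|) := by
    intro u; rw [← Real.exp_add]; ring_nf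
  have hcont : Continuous h := by
    apply Real.continuous_exp.comp
    apply Continuous.sub
    · exact ((continuous_const.mul continuous_id).neg.sub
        ((continuous_const.mul (continuous_pow 2)).div_const 2))
    · exact continuous_const.mul continuous_abs
  have hh : Integrable h := by
    apply Integrable.mono' ((integrable_exp_neg_abs' hlam).const_mul C') hcont.aestronglyMeasurable
    filter_upwards with u
    rw [Real.norm_eq_abs, abs_of_pos (Real.exp_pos _), hsplit u]
    exact mul_le_mul_of_nonneg_right (hball u) (Real.exp_pos _).le
  refine ⟨hh, ?_⟩
  have h1 : ∫ u, h u = (∫ u in Iic (0:ℝ), h u) + ∫ u in Ioi (0:ℝ), h u := by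
    rw [← integral_add_compl measurableSet_Iic hh, compl_Iic]
  have h2 : ∫ u in Iic (0:ℝ), h u = ∫ u in Ioi (0:ℝ), h (-u) := by
    rw [integral_comp_neg_Ioi, neg_zero]
  have h3 : (∫ u in Ioi (0:ℝ), h (-u)) + ∫ u in Ioi (0:ℝ), h u
      = ∫ u in Ioi (0:ℝ), (h (-u) + h u) := by
    rw [integral_add hh.comp_neg.integrableOn hh.integrableOn]
  have h4 : ∀ u ∈ Ioi (0:ℝ),
      2 * Real.exp (-(L*lam^2)*u^2/2 - lam*u) ≤ h (-u) + h u := by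
    intro u hu
    have hu0 : (0:ℝ) < u := hu
    have habs : |u| = u := abs_of_pos hu0
    have habs2 : |(-u)| = u := by rw [abs_neg, habs]
    rw [hh_def]
    simp only [habs, habs2]
    have e1 : Real.exp (-(a*(-u)) - (L*lam^2)*(-u)^2/2 - lam*u)
        = Real.exp (a*u) * Real.exp (-(L*lam^2)*u^2/2 - lam*u) := by
      rw [← Real.exp_add]; ring_nf
    have e2 : Real.exp (-(a*u) - (L*lam^2)*u^2/2 - lam*u)
        = Real.exp (-(a*u)) * Real.exp (-(L*lam^2)*u^2/2 - lam*u) := by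
      rw [← Real.exp_add]; ring_nf
    rw [e1, e2]
    have hq : Real.exp (a*u) + Real.exp (-(a*u)) ≥ 2 := by
      rw [show -(a*u) = -(a*u) by rfl, Real.exp_neg]
      have hq0 : 0 < Real.exp (a*u) := Real.exp_pos _
      rw [ge_iff_le, ← sub_nonneg]
      have : Real.exp (a*u) + (Real.exp (a*u))⁻¹ - 2
          = (Real.exp (a*u) - 1)^2 / Real.exp (a*u) := by field_simp; ring
      rw [this]; positivity
    nlinarith [Real.exp_pos (-(L*lam^2)*u^2/2 - lam*u)]
  have h5 : 2 * (1 / (lam * max (4/(Real.sqrt 5 - 1)) (2 * Real.sqrt L / (Real.sqrt 5 - 1))))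
      ≤ ∫ u in Ioi (0:ℝ), (h (-u) + h u) := by
    calc 2 * (1 / (lam * max (4/(Real.sqrt 5 - 1)) (2 * Real.sqrt L / (Real.sqrt 5 - 1))))
        ≤ 2 * ∫ u in Ioi (0:ℝ), Real.exp (-(L*lam^2)*u^2/2 - lam*u) := by
          linarith [lap_Ioi_bound' hL hlam]
      _ = ∫ u in Ioi (0:ℝ), 2 * Real.exp (-(L*lam^2)*u^2/2 - lam*u) := by
          rw [integral_const_mul]
      _ ≤ _ := by
          apply setIntegral_mono_on ((gauss_Ioi_integrableOn hL hlam).const_mul 2)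
            (hh.comp_neg.integrableOn.add hh.integrableOn) measurableSet_Ioi h4
  calc 2 / (lam * max (4/(Real.sqrt 5 - 1)) (2 * Real.sqrt L / (Real.sqrt 5 - 1)))
      = 2 * (1 / (lam * max (4/(Real.sqrt 5 - 1)) (2 * Real.sqrt L / (Real.sqrt 5 - 1)))) := by
        ring
    _ ≤ ∫ u in Ioi (0:ℝ), (h (-u) + h u) := h5
    _ = ∫ u, h u := by rw [← h3, ← h2, ← h1]

lemma gauss_line {a c : ℝ} (hc : 0 < c) :
    Integrable (fun u : ℝ => Real.exp (-(a*u) - c*u^2/2)) ∧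
    Real.sqrt (2*π/c) ≤ ∫ u : ℝ, Real.exp (-(a*u) - c*u^2/2) := by
  have hid : ∀ u : ℝ, Real.exp (-(a*u) - c*u^2/2)
      = Real.exp (a^2/(2*c)) * Real.exp (-(c/2)*(u + a/c)^2) := by
    intro u; rw [← Real.exp_add]; congr 1; field_simp; ring
  have hint : Integrable (fun u : ℝ => Real.exp (-(a*u) - c*u^2/2)) := by
    simp only [hid]
    exact ((integrable_exp_neg_mul_sq (by positivity : (0:ℝ) < c/2)).comp_add_right
      (a/c)).const_mul _
  refine ⟨hint, ?_⟩
  have hval : ∫ u : ℝ, Real.exp (-(a*u) - c*u^2/2)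
      = Real.exp (a^2/(2*c)) * Real.sqrt (π/(c/2)) := by
    simp only [hid]
    rw [integral_const_mul]
    congr 1
    calc ∫ u : ℝ, Real.exp (-(c/2)*(u + a/c)^2)
        = ∫ u : ℝ, Real.exp (-(c/2)*u^2) := integral_add_right_eq_self (fun u : ℝ => Real.exp (-(c/2)*u^2)) (a/c)
      _ = Real.sqrt (π/(c/2)) := integral_gaussian (c/2)
  rw [hval, show π/(c/2) = 2*π/c by field_simp]
  nlinarith [Real.add_one_le_exp (a^2/(2*c)), Real.sqrt_nonneg (2*π/c),
    sq_nonneg a, mul_pos (mul_pos two_pos Real.pi_pos) hc,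
    Real.sqrt_pos.2 (show (0:ℝ) < 2*π/c by positivity),
    mul_le_mul_of_nonneg_right (show (1:ℝ) ≤ Real.exp (a^2/(2*c)) by
      nlinarith [Real.add_one_le_exp (a^2/(2*c)), sq_nonneg a,
        div_nonneg (sq_nonneg a) (by positivity : (0:ℝ) ≤ 2*c)])
      (Real.sqrt_nonneg (2*π/c))]

lemma rpow_part {θ L : ℝ} (hθ : 0 < θ) (hL : 0 ≤ L) (d : ℕ) :
    ((L + θ^2)/θ^2 : ℝ) ^ ((d:ℝ)/2) * (Real.sqrt (2*π/(L+θ^2)))^d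
      * (θ^d / (2*π) ^ ((d:ℝ)/2)) = 1 := by
  have h2π : (0:ℝ) < 2*π := by positivity
  have hLθ : (0:ℝ) < L+θ^2 := by positivity
  have e1 : (Real.sqrt (2*π/(L+θ^2)))^d = ((2*π/(L+θ^2)) : ℝ) ^ ((d:ℝ)/2) := by
    rw [Real.sqrt_eq_rpow, ← Real.rpow_natCast ((2*π/(L+θ^2)) ^ ((1:ℝ)/2)) d,
      ← Real.rpow_mul (by positivity)]
    congr 1
    ring
  have e2 : (θ:ℝ)^d = (θ^2 : ℝ) ^ ((d:ℝ)/2) := by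
    rw [← Real.rpow_two, ← Real.rpow_mul hθ.le]
    rw [show (2:ℝ) * ((d:ℝ)/2) = (d:ℝ) by ring, Real.rpow_natCast]
  rw [e1, e2]
  rw [← Real.mul_rpow (by positivity) (by positivity)]
  rw [← Real.div_rpow (by positivity) h2π.le]
  rw [← Real.mul_rpow (by positivity) (by positivity)]
  rw [show (L + θ^2)/θ^2 * (2*π/(L+θ^2)) * (θ^2 / (2*π)) = 1 by
    field_simp]
  exact Real.one_rpow _

/-- Density ratio bound: if `f(y|α,β) ≤ C` and
`ℓ(α,β) ≤ ℓ₀ + ηᵀ(α,λβ) + (L/2)(‖α‖₂² + λ²‖β‖₂²)`, then the posterior density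
`π ∝ f · exp(−θ²‖α‖₂²/2 − λ‖β‖₁)` satisfies
`π/μ ≤ C e^{ℓ₀} ((L+θ²)/θ²)^{d/2} max{4/(√5−1), 2√L/(√5−1)}^p`, where `μ` is the
product of `N(0,θ⁻²)` and `Laplace(λ)` densities. -/
theorem posterior_density_ratio_bound {d p : ℕ} {θ lam C ℓ₀ L : ℝ}
    (hθ : 0 < θ) (hlam : 0 < lam) (hC : 0 < C) (hL : 0 ≤ L)
    (ηa : Fin d → ℝ) (ηb : Fin p → ℝ)
    (f : (Fin d → ℝ) × (Fin p → ℝ) → ℝ)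
    (hfpos : ∀ w, 0 < f w) (hfm : Measurable f) (hfC : ∀ w, f w ≤ C)
    (hℓ : ∀ w : (Fin d → ℝ) × (Fin p → ℝ),
      -Real.log (f w) ≤ ℓ₀ + ((∑ j, ηa j * w.1 j) + ∑ j, ηb j * (lam * w.2 j))
        + L / 2 * ((∑ j, w.1 j ^ 2) + lam ^ 2 * ∑ j, w.2 j ^ 2))
    (Z : ℝ)
    (hZ : Z = ∫ w : (Fin d → ℝ) × (Fin p → ℝ),
      f w * Real.exp (-θ ^ 2 * (∑ j, w.1 j ^ 2) / 2 - lam * ∑ j, |w.2 j|))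
    (μ : (Fin d → ℝ) × (Fin p → ℝ) → ℝ)
    (hμ : ∀ w, μ w = θ ^ d / (2 * π) ^ ((d : ℝ) / 2)
      * Real.exp (-θ ^ 2 * (∑ j, w.1 j ^ 2) / 2)
      * (lam ^ p / 2 ^ p) * Real.exp (-lam * ∑ j, |w.2 j|)) :
    ∀ w : (Fin d → ℝ) × (Fin p → ℝ),
      (f w * Real.exp (-θ ^ 2 * (∑ j, w.1 j ^ 2) / 2 - lam * ∑ j, |w.2 j|) / Z) / μ w
        ≤ C * Real.exp ℓ₀ * ((L + θ ^ 2) / θ ^ 2) ^ ((d : ℝ) / 2)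
          * max (4 / (Real.sqrt 5 - 1)) (2 * Real.sqrt L / (Real.sqrt 5 - 1)) ^ p := by
  have h51 : (0:ℝ) < Real.sqrt 5 - 1 := by linarith [sqrt5_gt]
  set M : ℝ := max (4 / (Real.sqrt 5 - 1)) (2 * Real.sqrt L / (Real.sqrt 5 - 1)) with hMdef
  have hM0 : 0 < M := lt_of_lt_of_le (by positivity) (le_max_left _ _)
  have hLθ : (0:ℝ) < L + θ^2 := by positivity
  -- factor functions
  set ga : (Fin d → ℝ) → ℝ :=
    fun α => ∏ j, Real.exp (-(ηa j * α j) - (L+θ^2)*(α j)^2/2) with hga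
  set gb : (Fin p → ℝ) → ℝ :=
    fun β => ∏ j, Real.exp (-(ηb j * lam * β j) - (L*lam^2)*(β j)^2/2 - lam*|β j|) with hgb
  set E : (Fin d → ℝ) × (Fin p → ℝ) → ℝ :=
    fun w => Real.exp (-θ ^ 2 * (∑ j, w.1 j ^ 2) / 2 - lam * ∑ j, |w.2 j|) with hE
  -- hball
  have hball : ∀ j : Fin p, ∀ u : ℝ,
      Real.exp (-(ηb j * lam * u) - (L*lam^2)*u^2/2) ≤ C * Real.exp ℓ₀ := by
    intro j u
    set w0 : (Fin d → ℝ) × (Fin p → ℝ) := ((fun _ => 0), Pi.single j u) with hw0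
    have hs1 : ∑ k, ηb k * (lam * w0.2 k) = ηb j * (lam * u) := by
      rw [Finset.sum_eq_single j]
      · rw [hw0]; simp [Pi.single_eq_same]
      · intro k _ hk; rw [hw0]; simp [Pi.single_eq_of_ne hk]
      · intro hj; exact absurd (Finset.mem_univ j) hj
    have hs2 : ∑ k, (w0.2 k)^2 = u^2 := by
      rw [Finset.sum_eq_single j]
      · rw [hw0]; simp [Pi.single_eq_same]
      · intro k _ hk; rw [hw0]; simp [Pi.single_eq_of_ne hk]
      · intro hj; exact absurd (Finset.mem_univ j) hj
    have hs3 : ∑ k, ηa k * w0.1 k = 0 := by rw [hw0]; simp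
    have hs4 : ∑ k, (w0.1 k)^2 = 0 := by rw [hw0]; simp
    have h := hℓ w0
    rw [hs1, hs2, hs3, hs4] at h
    have h2 : Real.exp (-(ℓ₀ + (0 + ηb j * (lam * u)) + L/2 * (0 + lam^2 * u^2))) ≤ f w0 := by
      rw [← Real.exp_log (hfpos w0)]
      exact Real.exp_le_exp.2 (by linarith)
    calc Real.exp (-(ηb j * lam * u) - (L*lam^2)*u^2/2)
        = Real.exp ℓ₀ * Real.exp (-(ℓ₀ + (0 + ηb j * (lam * u)) + L/2 * (0 + lam^2 * u^2))) := by
          rw [← Real.exp_add]; congr 1; ring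
      _ ≤ Real.exp ℓ₀ * C := mul_le_mul_of_nonneg_left (h2.trans (hfC w0)) (Real.exp_pos _).le
      _ = C * Real.exp ℓ₀ := mul_comm _ _
  -- per-coordinate integral facts
  have hGj := fun (j : Fin d) => gauss_line (a := ηa j) hLθ
  have hKj := fun (j : Fin p) => lap_line (a := ηb j * lam) hL hlam (by positivity) (hball j)
  -- pointwise lower bound
  have hlow_le : ∀ w, Real.exp (-ℓ₀) * (ga w.1 * gb w.2) ≤ f w * E w := by
    intro w
    have e1 : ga w.1 = Real.exp (∑ j, (-(ηa j * w.1 j) - (L+θ^2)*(w.1 j)^2/2)) :=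
      (Real.exp_sum _ _).symm
    have e2 : gb w.2 = Real.exp (∑ j, (-(ηb j * lam * w.2 j) - (L*lam^2)*(w.2 j)^2/2
        - lam*|w.2 j|)) := (Real.exp_sum _ _).symm
    have s1 : ∑ j, (-(ηa j * w.1 j) - (L+θ^2)*(w.1 j)^2/2)
        = -(∑ j, ηa j * w.1 j) - (L+θ^2)*(∑ j, w.1 j ^2)/2 := by
      rw [Finset.sum_sub_distrib, ← Finset.sum_neg_distrib, ← Finset.sum_div, ← Finset.mul_sum]
    have s2 : ∑ j, (-(ηb j * lam * w.2 j) - (L*lam^2)*(w.2 j)^2/2 - lam*|w.2 j|)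
        = -(∑ j, ηb j * (lam * w.2 j)) - (L*lam^2)*(∑ j, w.2 j ^2)/2
          - lam * (∑ j, |w.2 j|) := by
      rw [Finset.sum_sub_distrib, Finset.sum_sub_distrib, ← Finset.sum_neg_distrib,
        ← Finset.sum_div, ← Finset.mul_sum, ← Finset.mul_sum]
      congr 2
      · congr 1; funext j; ring
    have hfge : Real.exp (-(ℓ₀ + ((∑ j, ηa j * w.1 j) + ∑ j, ηb j * (lam * w.2 j))
        + L / 2 * ((∑ j, w.1 j ^ 2) + lam ^ 2 * ∑ j, w.2 j ^ 2))) ≤ f w := by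
      rw [← Real.exp_log (hfpos w)]
      exact Real.exp_le_exp.2 (by linarith [hℓ w])
    calc Real.exp (-ℓ₀) * (ga w.1 * gb w.2)
        = Real.exp (-(ℓ₀ + ((∑ j, ηa j * w.1 j) + ∑ j, ηb j * (lam * w.2 j))
            + L / 2 * ((∑ j, w.1 j ^ 2) + lam ^ 2 * ∑ j, w.2 j ^ 2))) * E w := by
          rw [e1, e2, s1, s2, hE, ← Real.exp_add, ← Real.exp_add, ← Real.exp_add]
          congr 1; ring
      _ ≤ f w * E w := mul_le_mul_of_nonneg_right hfge (Real.exp_pos _).le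
  -- integrability of the dominating product
  have hEacoord : Integrable (fun u : ℝ => Real.exp (-θ^2*u^2/2)) := by
    have h := integrable_exp_neg_mul_sq (show (0:ℝ) < θ^2/2 by positivity)
    have : (fun u : ℝ => Real.exp (-(θ^2/2)*u^2)) = fun u : ℝ => Real.exp (-θ^2*u^2/2) := by
      funext u; congr 1; ring
    rwa [this] at h
  have hEa : Integrable (fun α : Fin d → ℝ => ∏ j, Real.exp (-θ^2*(α j)^2/2)) :=
    Integrable.fintype_prod (fun _ => hEacoord)
  have hEb : Integrable (fun β : Fin p → ℝ => ∏ j, Real.exp (-lam*|β j|)) :=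
    Integrable.fintype_prod (fun _ => integrable_exp_neg_abs' hlam)
  have hEprod : Integrable (fun w : (Fin d → ℝ) × (Fin p → ℝ) =>
      (∏ j, Real.exp (-θ^2*(w.1 j)^2/2)) * ∏ j, Real.exp (-lam*|w.2 j|)) := by
    rw [show (volume : Measure ((Fin d → ℝ) × (Fin p → ℝ))) = volume.prod volume from
      Measure.volume_eq_prod _ _]
    exact hEa.mul_prod hEb
  have hEfactor : ∀ w : (Fin d → ℝ) × (Fin p → ℝ),
      E w = (∏ j, Real.exp (-θ^2*(w.1 j)^2/2)) * ∏ j, Real.exp (-lam*|w.2 j|) := by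
    intro w
    have q1 : (∏ j, Real.exp (-θ^2*(w.1 j)^2/2))
        = Real.exp (∑ j, -θ^2*(w.1 j)^2/2) := (Real.exp_sum _ _).symm
    have q2 : (∏ j, Real.exp (-lam*|w.2 j|))
        = Real.exp (∑ j, -lam*|w.2 j|) := (Real.exp_sum _ _).symm
    rw [hE, q1, q2, ← Real.exp_add, Real.exp_eq_exp]
    rw [← Finset.sum_div, ← Finset.mul_sum, ← Finset.mul_sum]
    ring
  have hEpos : ∀ w, 0 < E w := fun w => Real.exp_pos _
  have m1 : Measurable fun w : (Fin d → ℝ) × (Fin p → ℝ) => ∑ j, w.1 j ^ 2 := by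
    apply Finset.measurable_sum
    intro j _
    exact ((measurable_pi_apply j).comp measurable_fst).pow_const 2
  have m2 : Measurable fun w : (Fin d → ℝ) × (Fin p → ℝ) => ∑ j, |w.2 j| := by
    apply Finset.measurable_sum
    intro j _
    exact ((measurable_pi_apply j).comp measurable_snd).abs
  have hEm : Measurable E :=
    Real.measurable_exp.comp (((m1.const_mul (-θ^2)).div_const 2).sub (m2.const_mul lam))
  have hup : Integrable (fun w : (Fin d → ℝ) × (Fin p → ℝ) => f w * E w) := by
    apply Integrable.mono' (hEprod.const_mul C) (hfm.mul hEm).aestronglyMeasurable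
    filter_upwards with w
    rw [Real.norm_eq_abs, Pi.mul_apply, abs_of_nonneg (mul_nonneg (hfpos w).le (hEpos w).le)]
    calc f w * E w ≤ C * E w := mul_le_mul_of_nonneg_right (hfC w) (hEpos w).le
      _ = C * ((∏ j, Real.exp (-θ^2*(w.1 j)^2/2)) * ∏ j, Real.exp (-lam*|w.2 j|)) := by
          rw [hEfactor w]
  have gaInt : Integrable ga := Integrable.fintype_prod (fun j => (hGj j).1)
  have gbInt : Integrable gb := Integrable.fintype_prod (fun j => (hKj j).1)
  have hlowint : Integrable (fun w : (Fin d → ℝ) × (Fin p → ℝ) =>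
      Real.exp (-ℓ₀) * (ga w.1 * gb w.2)) := by
    apply Integrable.const_mul
    rw [show (volume : Measure ((Fin d → ℝ) × (Fin p → ℝ))) = volume.prod volume from
      Measure.volume_eq_prod _ _]
    exact gaInt.mul_prod gbInt
  have hZge : ∫ w : (Fin d → ℝ) × (Fin p → ℝ), Real.exp (-ℓ₀) * (ga w.1 * gb w.2) ≤ Z := by
    rw [hZ]
    exact integral_mono hlowint hup hlow_le
  have hlowval : ∫ w : (Fin d → ℝ) × (Fin p → ℝ), Real.exp (-ℓ₀) * (ga w.1 * gb w.2)
      = Real.exp (-ℓ₀) * ((∫ α, ga α) * ∫ β, gb β) := by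
    rw [integral_const_mul]
    congr 1
    rw [show (volume : Measure ((Fin d → ℝ) × (Fin p → ℝ))) = volume.prod volume from
      Measure.volume_eq_prod _ _]
    exact integral_prod_mul ga gb
  have hgaval : ∫ α, ga α
      = ∏ j : Fin d, ∫ u : ℝ, Real.exp (-(ηa j * u) - (L+θ^2)*u^2/2) := by
    rw [hga]
    exact integral_fintype_prod_eq_prod
      (fun j (u : ℝ) => Real.exp (-(ηa j * u) - (L+θ^2)*u^2/2))
  have hgbval : ∫ β, gb β
      = ∏ j : Fin p, ∫ u : ℝ, Real.exp (-(ηb j * lam * u) - (L*lam^2)*u^2/2 - lam*|u|) := by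
    rw [hgb]
    exact integral_fintype_prod_eq_prod
      (fun j (u : ℝ) => Real.exp (-(ηb j * lam * u) - (L*lam^2)*u^2/2 - lam*|u|))
  have hgabound : Real.sqrt (2*π/(L+θ^2)) ^ d ≤ ∫ α, ga α := by
    rw [hgaval]
    calc Real.sqrt (2*π/(L+θ^2)) ^ d = ∏ _j : Fin d, Real.sqrt (2*π/(L+θ^2)) := by
          rw [Finset.prod_const, Finset.card_univ, Fintype.card_fin]
      _ ≤ _ := Finset.prod_le_prod (fun j _ => Real.sqrt_nonneg _) (fun j _ => (hGj j).2)
  have hgbbound : (2/(lam*M)) ^ p ≤ ∫ β, gb β := by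
    rw [hgbval]
    calc (2/(lam*M)) ^ p = ∏ _j : Fin p, (2/(lam*M)) := by
          rw [Finset.prod_const, Finset.card_univ, Fintype.card_fin]
      _ ≤ _ := Finset.prod_le_prod (fun j _ => by positivity) (fun j _ => (hKj j).2)
  have hZlb : Real.exp (-ℓ₀) * (Real.sqrt (2*π/(L+θ^2)) ^ d * (2/(lam*M)) ^ p) ≤ Z := by
    have h1 : Real.sqrt (2*π/(L+θ^2)) ^ d * (2/(lam*M)) ^ p ≤ (∫ α, ga α) * ∫ β, gb β :=
      mul_le_mul hgabound hgbbound (by positivity)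
        (le_trans (by positivity) hgabound)
    have h2 := hZge
    rw [hlowval] at h2
    exact le_trans (mul_le_mul_of_nonneg_left h1 (Real.exp_pos _).le) h2
  have hZ0 : 0 < Z := lt_of_lt_of_le (by positivity) hZlb
  -- final computation
  intro w
  have hnum : Real.exp (-θ ^ 2 * (∑ j, w.1 j ^ 2) / 2 - lam * ∑ j, |w.2 j|)
      = Real.exp (-θ ^ 2 * (∑ j, w.1 j ^ 2) / 2) * Real.exp (-lam * ∑ j, |w.2 j|) := by
    rw [← Real.exp_add]
    congr 1
    ring
  rw [hμ w, hnum]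
  have hA : (0:ℝ) < Real.exp (-θ ^ 2 * (∑ j, w.1 j ^ 2) / 2) := Real.exp_pos _
  have hB : (0:ℝ) < Real.exp (-lam * ∑ j, |w.2 j|) := Real.exp_pos _
  have h2pd : (0:ℝ) < (2*π) ^ ((d:ℝ)/2) := by positivity
  have heq : (f w * (Real.exp (-θ ^ 2 * (∑ j, w.1 j ^ 2) / 2)
        * Real.exp (-lam * ∑ j, |w.2 j|)) / Z)
      / (θ ^ d / (2 * π) ^ ((d : ℝ) / 2) * Real.exp (-θ ^ 2 * (∑ j, w.1 j ^ 2) / 2)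
        * (lam ^ p / 2 ^ p) * Real.exp (-lam * ∑ j, |w.2 j|))
      = f w / (Z * (θ ^ d / (2 * π) ^ ((d : ℝ) / 2)) * (lam ^ p / 2 ^ p)) := by
    rw [div_div, div_eq_div_iff (by positivity) (by positivity)]
    ring
  rw [heq, div_le_iff₀ (by positivity)]
  have hexp1 : Real.exp ℓ₀ * Real.exp (-ℓ₀) = 1 := by
    rw [← Real.exp_add]; simp
  have hMp : M^p * ((2/(lam*M))^p * lam^p / 2^p) = 1 := by
    have h1 : M * (2/(lam*M)) * lam / 2 = 1 := by field_simp
    have h2 : (M * (2/(lam*M)) * lam / 2)^p = M^p * ((2/(lam*M))^p * lam^p / 2^p) := by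
      rw [div_pow, mul_pow, mul_pow, mul_assoc, mul_div_assoc]
    rw [← h2, h1, one_pow]
  have hR := rpow_part hθ hL d
  calc f w ≤ C := hfC w
    _ = C * Real.exp ℓ₀ * ((L + θ^2)/θ^2) ^ ((d:ℝ)/2) * M ^ p
        * (Real.exp (-ℓ₀) * (Real.sqrt (2*π/(L+θ^2)) ^ d * (2/(lam*M)) ^ p)
           * (θ^d/(2*π) ^ ((d:ℝ)/2)) * (lam^p/2^p)) := by
        calc C = C * (Real.exp ℓ₀ * Real.exp (-ℓ₀))
            * (((L + θ^2)/θ^2) ^ ((d:ℝ)/2) * (Real.sqrt (2*π/(L+θ^2)))^d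
              * (θ^d/(2*π) ^ ((d:ℝ)/2)))
            * (M^p * ((2/(lam*M))^p * lam^p / 2^p)) := by
              rw [hexp1, hR, hMp]; ring
          _ = _ := by ring
    _ ≤ C * Real.exp ℓ₀ * ((L + θ^2)/θ^2) ^ ((d:ℝ)/2) * M ^ p
        * (Z * (θ^d/(2*π) ^ ((d:ℝ)/2)) * (lam^p/2^p)) := by
        apply mul_le_mul_of_nonneg_left ?_ ?_
        · apply mul_le_mul_of_nonneg_right ?_ (by positivity)
          apply mul_le_mul_of_nonneg_right hZlb (by positivity)
        · have : (0:ℝ) ≤ ((L + θ^2)/θ^2) ^ ((d:ℝ)/2) := by positivity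
          have hMpn : (0:ℝ) ≤ M ^ p := pow_nonneg hM0.le p
          positivity
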